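/- arXiv:1610.02175 — 3 statements merged into one kernel-verified Lean document; each statement's English description precedes it below -/
import Mathlib

section
/- Let G be a finite simple graph and T₂(G) its edge-semitotal graph (insert a vertex into each edge and join two new vertices whenever the corresponding edges of G are adjacent). Then F(T₂(G)) = F(G) + ξ₄(G) + 3·ReZG₃(G). -/
open SimpleGraph Finset
open scoped Classical

noncomputable section
namespace Paper

variable {V : Type*} [Fintype V]

/-- Degree as an integer. -/
def d (G : SimpleGraph V) (v : V) : ℤ := G.degree v

/-- Number of edges. -/
def m (G : SimpleGraph V) : ℤ := G.edgeFinset.card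

/-- Sum over unordered edges of a symmetric vertex-pair function. -/
def edgeSum (G : SimpleGraph V) (f : V → V → ℤ) (hf : ∀ u v, f u v = f v u) : ℤ :=
  ∑ e ∈ G.edgeFinset, Sym2.lift ⟨f, hf⟩ e

/-- First Zagreb index. -/
def M1 (G : SimpleGraph V) : ℤ := ∑ v, d G v ^ 2

/-- Second Zagreb index. -/
def M2 (G : SimpleGraph V) : ℤ :=
  edgeSum G (fun u v => d G u * d G v) (by intros; ring)

/-- F-index. -/
def F (G : SimpleGraph V) : ℤ := ∑ v, d G v ^ 3

/-- ξ₄. -/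
def xi4 (G : SimpleGraph V) : ℤ := ∑ v, d G v ^ 4

/-- Redefined third Zagreb index. -/
def ReZG3 (G : SimpleGraph V) : ℤ :=
  edgeSum G (fun u v => d G u * d G v * (d G u + d G v)) (by intros; ring)

/-- F-coindex: sum over edges of the complement with degrees in G. -/
def Fbar (G : SimpleGraph V) : ℤ :=
  edgeSum Gᶜ (fun u v => d G u ^ 2 + d G v ^ 2) (by intros; ring)

/-- Subdivision graph. -/
def subdivision (G : SimpleGraph V) : SimpleGraph (V ⊕ G.edgeSet) where
  Adj x y :=
    match x, y with
    | Sum.inl u, Sum.inr e => u ∈ (e : Sym2 V)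
    | Sum.inr e, Sum.inl u => u ∈ (e : Sym2 V)
    | _, _ => False
  symm := by constructor; rintro (u | e) (v | f) h <;> first | exact h | exact h.elim
  loopless := by constructor; rintro (u | e) <;> simp

/-- Vertex-semitotal graph. -/
def vertexSemitotal (G : SimpleGraph V) : SimpleGraph (V ⊕ G.edgeSet) where
  Adj x y :=
    match x, y with
    | Sum.inl u, Sum.inl v => G.Adj u v
    | Sum.inl u, Sum.inr e => u ∈ (e : Sym2 V)
    | Sum.inr e, Sum.inl u => u ∈ (e : Sym2 V)
    | _, _ => False
  symm := by
    constructor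
    rintro (u | e) (v | f) h
    · exact G.symm.symm _ _ h
    · exact h
    · exact h
    · exact h.elim
  loopless := by
    constructor
    rintro (u | e) h
    · exact G.loopless.irrefl u h
    · exact h

/-- Edge-semitotal graph. -/
def edgeSemitotal (G : SimpleGraph V) : SimpleGraph (V ⊕ G.edgeSet) where
  Adj x y :=
    match x, y with
    | Sum.inl u, Sum.inr e => u ∈ (e : Sym2 V)
    | Sum.inr e, Sum.inl u => u ∈ (e : Sym2 V)
    | Sum.inr e, Sum.inr f => e ≠ f ∧ ∃ v, v ∈ (e : Sym2 V) ∧ v ∈ (f : Sym2 V)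
    | _, _ => False
  symm := by
    constructor
    rintro (u | e) (v | f) h
    · exact h.elim
    · exact h
    · exact h
    · obtain ⟨hne, w, h1, h2⟩ := h
      exact ⟨hne.symm, w, h2, h1⟩
  loopless := by
    constructor
    rintro (u | e) h
    · exact h
    · exact h.1 rfl

/-- Total graph. -/
def total (G : SimpleGraph V) : SimpleGraph (V ⊕ G.edgeSet) where
  Adj x y :=
    match x, y with
    | Sum.inl u, Sum.inl v => G.Adj u v
    | Sum.inl u, Sum.inr e => u ∈ (e : Sym2 V)
    | Sum.inr e, Sum.inl u => u ∈ (e : Sym2 V)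
    | Sum.inr e, Sum.inr f => e ≠ f ∧ ∃ v, v ∈ (e : Sym2 V) ∧ v ∈ (f : Sym2 V)
  symm := by
    constructor
    rintro (u | e) (v | f) h
    · exact G.symm.symm _ _ h
    · exact h
    · exact h
    · obtain ⟨hne, w, h1, h2⟩ := h
      exact ⟨hne.symm, w, h2, h1⟩
  loopless := by
    constructor
    rintro (u | e) h
    · exact G.loopless.irrefl u h
    · exact h.1 rfl

/-- Paraline graph: line graph of the subdivision graph. -/
def paraline (G : SimpleGraph V) : SimpleGraph (subdivision G).edgeSet :=
  (subdivision G).lineGraph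


lemma degree_eq_sum {W : Type*} [Fintype W] (H : SimpleGraph W) (x : W) :
    (H.degree x : ℤ) = ∑ y, if H.Adj x y then 1 else 0 := by
  classical
  rw [← card_neighborFinset_eq_degree, neighborFinset_eq_filter, Finset.card_filter]
  push_cast
  rfl

lemma sum_mem_edgeFinset (G : SimpleGraph V) (v : V) :
    ∑ e ∈ G.edgeFinset, (if v ∈ e then (1:ℤ) else 0) = d G v := by
  classical
  rw [Finset.sum_boole, ← G.incidenceFinset_eq_filter, G.card_incidenceFinset_eq_degree]
  rfl

lemma sum_mem_edge (G : SimpleGraph V) (v : V) :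
    ∑ e : G.edgeSet, (if v ∈ (e : Sym2 V) then (1:ℤ) else 0) = d G v := by
  classical
  rw [← Finset.sum_subtype G.edgeFinset (fun e => G.mem_edgeFinset)
      (fun e => if v ∈ e then (1:ℤ) else 0)]
  exact sum_mem_edgeFinset G v

lemma d_inl (G : SimpleGraph V) (u : V) : d (edgeSemitotal G) (Sum.inl u) = d G u := by
  show ((edgeSemitotal G).degree (Sum.inl u) : ℤ) = d G u
  rw [degree_eq_sum, Fintype.sum_sum_type]
  have h1 : ∑ v : V, (if (edgeSemitotal G).Adj (Sum.inl u) (Sum.inl v) then (1:ℤ) else 0) = 0 := by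
    simp [edgeSemitotal]
  have h2 : ∀ e : G.edgeSet, (edgeSemitotal G).Adj (Sum.inl u) (Sum.inr e) ↔ u ∈ (e : Sym2 V) :=
    fun e => Iff.rfl
  rw [h1, zero_add]
  rw [show (∑ e : G.edgeSet, if (edgeSemitotal G).Adj (Sum.inl u) (Sum.inr e) then (1:ℤ) else 0)
      = ∑ e : G.edgeSet, if u ∈ (e : Sym2 V) then (1:ℤ) else 0 from by
    refine Finset.sum_congr rfl fun e _ => by rw [if_congr (h2 e) rfl rfl]]
  exact sum_mem_edge G u

lemma d_inr' (G : SimpleGraph V) (a b : V) (hab : s(a,b) ∈ G.edgeSet) :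
    d (edgeSemitotal G) (Sum.inr ⟨s(a,b), hab⟩) = d G a + d G b := by
  classical
  have hne : a ≠ b := (G.mem_edgeSet.mp hab).ne
  set e : G.edgeSet := ⟨s(a,b), hab⟩ with he
  show ((edgeSemitotal G).degree (Sum.inr e) : ℤ) = d G a + d G b
  rw [degree_eq_sum, Fintype.sum_sum_type]
  have h1 : ∑ v : V, (if (edgeSemitotal G).Adj (Sum.inr e) (Sum.inl v) then (1:ℤ) else 0) = 2 := by
    have : ∀ v : V, (if (edgeSemitotal G).Adj (Sum.inr e) (Sum.inl v) then (1:ℤ) else 0)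
        = (if v = a then (1:ℤ) else 0) + (if v = b then (1:ℤ) else 0) := by
      intro v
      have hadj : (edgeSemitotal G).Adj (Sum.inr e) (Sum.inl v) ↔ (v = a ∨ v = b) := by
        show v ∈ (e : Sym2 V) ↔ _
        rw [he]; exact Sym2.mem_iff
      rw [if_congr hadj rfl rfl]
      by_cases hva : v = a <;> by_cases hvb : v = b <;> simp_all
    rw [Finset.sum_congr rfl fun v _ => this v, Finset.sum_add_distrib]
    simp
  have h2 : ∑ f : G.edgeSet, (if (edgeSemitotal G).Adj (Sum.inr e) (Sum.inr f) then (1:ℤ) else 0)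
      = d G a + d G b - 2 := by
    have key : ∀ f : G.edgeSet,
        (if (edgeSemitotal G).Adj (Sum.inr e) (Sum.inr f) then (1:ℤ) else 0)
        = (if a ∈ (f : Sym2 V) then (1:ℤ) else 0) + (if b ∈ (f : Sym2 V) then (1:ℤ) else 0)
          - 2 * (if f = e then (1:ℤ) else 0) := by
      intro f
      have hadj : (edgeSemitotal G).Adj (Sum.inr e) (Sum.inr f)
          ↔ (e ≠ f ∧ ∃ v, v ∈ (e : Sym2 V) ∧ v ∈ (f : Sym2 V)) := Iff.rfl
      by_cases hfe : f = e
      · have hloop : ¬ (edgeSemitotal G).Adj (Sum.inr e) (Sum.inr f) := by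
          rw [hfe]; exact (edgeSemitotal G).loopless.irrefl _
        rw [if_neg hloop, if_pos hfe]
        have ha : a ∈ (f : Sym2 V) := by rw [hfe, he]; exact Sym2.mem_mk_left a b
        have hb : b ∈ (f : Sym2 V) := by rw [hfe, he]; exact Sym2.mem_mk_right a b
        rw [if_pos ha, if_pos hb]; ring
      · have hmem : (∃ v, v ∈ (e : Sym2 V) ∧ v ∈ (f : Sym2 V)) ↔
            (a ∈ (f : Sym2 V) ∨ b ∈ (f : Sym2 V)) := by
          constructor
          · rintro ⟨v, hv1, hv2⟩
            rw [he] at hv1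
            rcases Sym2.mem_iff.mp hv1 with rfl | rfl
            · exact Or.inl hv2
            · exact Or.inr hv2
          · rintro (h | h)
            · exact ⟨a, by rw [he]; exact Sym2.mem_mk_left a b, h⟩
            · exact ⟨b, by rw [he]; exact Sym2.mem_mk_right a b, h⟩
        have hnotboth : ¬ (a ∈ (f : Sym2 V) ∧ b ∈ (f : Sym2 V)) := by
          rintro ⟨ha, hb⟩
          apply hfe
          apply Subtype.ext
          rw [(Sym2.mem_and_mem_iff hne).mp ⟨ha, hb⟩, he]
        have hadj2 : (edgeSemitotal G).Adj (Sum.inr e) (Sum.inr f)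
            ↔ (a ∈ (f : Sym2 V) ∨ b ∈ (f : Sym2 V)) := by
          rw [hadj, hmem, and_iff_right (Ne.symm hfe)]
        rw [if_congr hadj2 rfl rfl, if_neg hfe]
        by_cases h1 : a ∈ (f : Sym2 V) <;> by_cases h2 : b ∈ (f : Sym2 V) <;> simp_all
    rw [Finset.sum_congr rfl fun f _ => key f]
    rw [Finset.sum_sub_distrib, Finset.sum_add_distrib, ← Finset.mul_sum]
    rw [sum_mem_edge G a, sum_mem_edge G b]
    rw [Fintype.sum_ite_eq' e (fun _ => (1:ℤ))]
    ring
  rw [h1, h2]; ring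

lemma d_inr (G : SimpleGraph V) (e : G.edgeSet) :
    d (edgeSemitotal G) (Sum.inr e) =
      Sym2.lift ⟨fun a b => d G a + d G b, by intros; ring⟩ (e : Sym2 V) := by
  obtain ⟨s, hs⟩ := e
  induction s using Sym2.inductionOn with
  | hf a b => simpa using d_inr' G a b hs

lemma handshake (G : SimpleGraph V) (g : V → ℤ) :
    ∑ e ∈ G.edgeFinset, Sym2.lift ⟨fun a b => g a + g b, by intros; ring⟩ e
      = ∑ v, d G v * g v := by
  classical
  have step : ∀ e ∈ G.edgeFinset,
      Sym2.lift ⟨fun a b => g a + g b, by intros; ring⟩ e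
        = ∑ v, (if v ∈ e then (1:ℤ) else 0) * g v := by
    intro e he
    induction e using Sym2.inductionOn with
    | hf a b =>
      have hne : a ≠ b := (G.mem_edgeSet.mp (mem_edgeFinset.mp he)).ne
      rw [Sym2.lift_mk]
      have : ∀ v : V, (if v ∈ s(a,b) then (1:ℤ) else 0) * g v
          = (if v = a then g v else 0) + (if v = b then g v else 0) := by
        intro v
        rw [if_congr (Sym2.mem_iff) rfl rfl]
        by_cases hva : v = a <;> by_cases hvb : v = b <;> simp_all
      rw [Finset.sum_congr rfl fun v _ => this v, Finset.sum_add_distrib]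
      simp
  rw [Finset.sum_congr rfl step, Finset.sum_comm]
  refine Finset.sum_congr rfl fun v _ => ?_
  rw [← Finset.sum_mul, sum_mem_edgeFinset]

theorem stmt5 {V : Type*} [Fintype V] (G : SimpleGraph V) :
    F (edgeSemitotal G) = F G + xi4 G + 3 * ReZG3 G := by
  classical
  unfold F
  rw [Fintype.sum_sum_type]
  have h1 : ∑ v : V, d (edgeSemitotal G) (Sum.inl v) ^ 3 = ∑ v : V, d G v ^ 3 :=
    Finset.sum_congr rfl fun v _ => by rw [d_inl]
  have h2 : ∑ e : G.edgeSet, d (edgeSemitotal G) (Sum.inr e) ^ 3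
      = ∑ e ∈ G.edgeFinset,
          (Sym2.lift ⟨fun a b => d G a + d G b, by intros; ring⟩ e) ^ 3 := by
    refine Eq.trans (Finset.sum_congr rfl fun e _ => by rw [d_inr])
      (Finset.sum_subtype G.edgeFinset (fun e => G.mem_edgeFinset)
        (fun e => (Sym2.lift ⟨fun a b => d G a + d G b, fun _ _ => add_comm _ _⟩ e) ^ 3)).symm
  rw [h1, h2]
  have expand : ∀ e ∈ G.edgeFinset,
      (Sym2.lift ⟨fun a b => d G a + d G b, by intros; ring⟩ e) ^ 3
      = Sym2.lift ⟨fun a b => d G a ^ 3 + d G b ^ 3, by intros; ring⟩ e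
        + 3 * Sym2.lift ⟨fun a b => d G a * d G b * (d G a + d G b), by intros; ring⟩ e := by
    intro e _
    induction e using Sym2.inductionOn with
    | hf a b => simp only [Sym2.lift_mk]; ring
  rw [Finset.sum_congr rfl expand, Finset.sum_add_distrib, ← Finset.mul_sum]
  have hx : ∑ e ∈ G.edgeFinset,
      Sym2.lift ⟨fun a b => d G a ^ 3 + d G b ^ 3, by intros; ring⟩ e = xi4 G := by
    rw [handshake G (fun v => d G v ^ 3)]
    unfold xi4
    exact Finset.sum_congr rfl fun v _ => by ring
  rw [hx]
  unfold ReZG3 edgeSum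
  ring


end Paper
end
end

section
/- Let G be a finite simple graph with m edges. The first Zagreb index of the line graph L(G) satisfies M₁(L(G)) = F(G) - 4·M₁(G) + 2·M₂(G) + 4m. -/
open SimpleGraph Finset
open scoped Classical

noncomputable section
namespace Paper

variable {V : Type*} [Fintype V]

-- auxiliary: sum over edges of g u + g v equals weighted degree sum
lemma sum_edge_add (G : SimpleGraph V) (g : V → ℤ) (hg : ∀ u v : V, g u + g v = g v + g u) :
    ∑ e ∈ G.edgeFinset, Sym2.lift ⟨fun u v => g u + g v, hg⟩ e
      = ∑ v, d G v * g v := by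
  have h1 : ∑ dt : G.Dart, g dt.fst = ∑ v, d G v * g v := by
    rw [← Finset.sum_fiberwise (univ : Finset G.Dart) (fun dt => dt.fst) (fun dt => g dt.fst)]
    refine Finset.sum_congr rfl fun v _ => ?_
    calc ∑ dt ∈ filter (fun dt : G.Dart => dt.fst = v) univ, g dt.fst
        = ∑ _dt ∈ filter (fun dt : G.Dart => dt.fst = v) univ, g v :=
          Finset.sum_congr rfl (fun dt hdt => by rw [(Finset.mem_filter.mp hdt).2])
      _ = d G v * g v := by
          rw [Finset.sum_const, G.dart_fst_fiber_card_eq_degree v]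
          simp [d, mul_comm]
  have h2 : ∑ dt : G.Dart, g dt.fst
      = ∑ e ∈ G.edgeFinset, Sym2.lift ⟨fun u v => g u + g v, hg⟩ e := by
    rw [← Finset.sum_fiberwise_of_maps_to
      (g := Dart.edge) (t := G.edgeFinset)
      (fun dt _ => by rw [mem_edgeFinset]; exact dt.edge_mem) (fun dt => g dt.fst)]
    refine Finset.sum_congr rfl fun e he => ?_
    rw [mem_edgeFinset] at he
    induction e with
    | _ u v =>
      rw [mem_edgeSet] at he
      have hD : (SimpleGraph.Dart.mk (u, v) he).edge = s(u, v) := rfl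
      rw [← hD, Finset.filter_congr (fun dt _ => Iff.rfl)]
      rw [show ({dt ∈ (univ : Finset G.Dart) | dt.edge = (Dart.mk (u,v) he).edge})
          = {Dart.mk (u,v) he, (Dart.mk (u,v) he).symm} from Dart.edge_fiber _]
      rw [Finset.sum_pair (by
        intro hcon
        have := congrArg (fun dt : G.Dart => dt.fst) hcon
        exact G.ne_of_adj he this)]
      simp
  exact h2.symm.trans h1

lemma lineGraph_degree (G : SimpleGraph V) (e : G.edgeSet) :
    ((G.lineGraph.degree e : ℕ) : ℤ)
      = Sym2.lift ⟨fun u v => d G u + d G v - 2, by intros; ring⟩ (e : Sym2 V) := by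
  obtain ⟨e, he⟩ := e
  induction e with
  | _ u v =>
    have hadj : G.Adj u v := (G.mem_edgeSet).mp he
    have hne : u ≠ v := G.ne_of_adj hadj
    have himg : ((G.lineGraph.neighborFinset ⟨s(u,v), he⟩).image Subtype.val)
        = (G.incidenceFinset u ∪ G.incidenceFinset v).erase s(u,v) := by
      ext f
      simp only [Finset.mem_image, mem_neighborFinset, lineGraph_adj_iff_exists,
        Finset.mem_erase, Finset.mem_union, mem_incidenceFinset, SimpleGraph.incidenceSet, Set.mem_sep_iff]
      constructor
      · rintro ⟨⟨f', hf'⟩, ⟨hnef, w, hw1, hw2⟩, rfl⟩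
        refine ⟨fun hcon => hnef (Subtype.ext hcon.symm), ?_⟩
        rcases Sym2.mem_iff.mp hw1 with rfl | rfl
        · exact Or.inl ⟨hf', hw2⟩
        · exact Or.inr ⟨hf', hw2⟩
      · rintro ⟨hnef, hf⟩
        rcases hf with ⟨hf', hw⟩ | ⟨hf', hw⟩
        · exact ⟨⟨f, hf'⟩, ⟨fun hcon => hnef (congrArg Subtype.val hcon).symm,
            u, Sym2.mem_mk_left u v, hw⟩, rfl⟩
        · exact ⟨⟨f, hf'⟩, ⟨fun hcon => hnef (congrArg Subtype.val hcon).symm,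
            v, Sym2.mem_mk_right u v, hw⟩, rfl⟩
    have hinter : G.incidenceFinset u ∩ G.incidenceFinset v = {s(u,v)} := by
      ext f
      simp only [Finset.mem_inter, mem_incidenceFinset, SimpleGraph.incidenceSet, Set.mem_sep_iff,
        Finset.mem_singleton]
      constructor
      · rintro ⟨⟨hf1, hu⟩, ⟨hf2, hv⟩⟩
        exact (Sym2.mem_and_mem_iff hne).mp ⟨hu, hv⟩
      · rintro rfl
        exact ⟨⟨he, Sym2.mem_mk_left u v⟩, ⟨he, Sym2.mem_mk_right u v⟩⟩
    have hmem : s(u,v) ∈ G.incidenceFinset u ∪ G.incidenceFinset v := by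
      simp [mem_incidenceFinset, SimpleGraph.incidenceSet, Set.mem_sep_iff, he]
    have hcardU : ((G.incidenceFinset u ∪ G.incidenceFinset v).card : ℤ)
        = d G u + d G v - 1 := by
      have := Finset.card_union_add_card_inter (G.incidenceFinset u) (G.incidenceFinset v)
      rw [hinter, Finset.card_singleton, G.card_incidenceFinset_eq_degree,
        G.card_incidenceFinset_eq_degree] at this
      have := congrArg (fun n : ℕ => (n : ℤ)) this
      push_cast at this
      simp only [d]
      omega
    have hdeg : ((G.lineGraph.degree ⟨s(u,v), he⟩ : ℕ) : ℤ)
        = d G u + d G v - 2 := by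
      rw [← card_neighborFinset_eq_degree,
        ← Finset.card_image_of_injective _ Subtype.val_injective, himg,
        Finset.cast_card_erase_of_mem hmem, hcardU]
      ring
    rw [hdeg]
    simp
theorem stmt9 {V : Type*} [Fintype V] (G : SimpleGraph V) :
    M1 G.lineGraph = F G - 4 * M1 G + 2 * M2 G + 4 * m G := by
  have hM1 : M1 G.lineGraph
      = ∑ e ∈ G.edgeFinset,
        (Sym2.lift ⟨fun u v => d G u + d G v - 2, by intros; ring⟩ e) ^ 2 := by
    rw [Finset.sum_subtype G.edgeFinset (fun x => G.mem_edgeFinset)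
      (fun e => (Sym2.lift ⟨fun u v => d G u + d G v - 2, by intros; ring⟩ e) ^ 2)]
    unfold M1
    refine Finset.sum_congr rfl fun e _ => ?_
    exact congrArg (· ^ 2) (lineGraph_degree G e)
  rw [hM1]
  have hexp : ∀ e ∈ G.edgeFinset,
      (Sym2.lift ⟨fun u v => d G u + d G v - 2, by intros; ring⟩ e) ^ 2
      = Sym2.lift ⟨fun u v => d G u ^ 2 + d G v ^ 2, by intros; ring⟩ e
        + 2 * Sym2.lift ⟨fun u v => d G u * d G v, by intros; ring⟩ e
        - 4 * Sym2.lift ⟨fun u v => d G u + d G v, by intros; ring⟩ e + 4 := by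
    intro e _
    induction e with
    | _ u v => simp only [Sym2.lift_mk]; ring
  rw [Finset.sum_congr rfl hexp]
  rw [Finset.sum_add_distrib, Finset.sum_sub_distrib, Finset.sum_add_distrib,
    ← Finset.mul_sum, ← Finset.mul_sum, Finset.sum_const]
  have hF : ∑ e ∈ G.edgeFinset,
      Sym2.lift ⟨fun u v => d G u ^ 2 + d G v ^ 2, by intros; ring⟩ e = F G := by
    rw [sum_edge_add G (fun v => d G v ^ 2) (by intros; ring)]
    exact Finset.sum_congr rfl fun v _ => by ring
  have hD : ∑ e ∈ G.edgeFinset,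
      Sym2.lift ⟨fun u v => d G u + d G v, by intros; ring⟩ e = M1 G := by
    rw [sum_edge_add G (d G) (by intros; ring)]
    exact Finset.sum_congr rfl fun v _ => by ring
  have hC : ∑ e ∈ G.edgeFinset,
      Sym2.lift ⟨fun u v => d G u * d G v, by intros; ring⟩ e = M2 G := rfl
  rw [hF, hD, hC, nsmul_eq_mul]
  show F G + 2 * M2 G - 4 * M1 G + (G.edgeFinset.card : ℤ) * 4 = _
  rw [show ((G.edgeFinset.card : ℕ) : ℤ) = m G from rfl]
  ring

end Paper
end
end

section
/- Let G be a finite simple graph with n vertices and m edges. The F-coindex of the vertex-semitotal graph satisfies F̄(T₁(G)) = 4(m+n-1)·M₁(G) - 8·F(G) + 4m(m+n-3). -/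
open SimpleGraph Finset
open scoped Classical

noncomputable section
namespace Paper

variable {V : Type*} [Fintype V]

section Aux
variable {W : Type*} [Fintype W]

lemma dart_sum_eq_degree_sum (K : SimpleGraph W) (g : W → ℤ) :
    ∑ dd : K.Dart, g dd.fst = ∑ v, (K.degree v : ℤ) * g v := by
  classical
  rw [← Finset.sum_fiberwise Finset.univ (fun dd : K.Dart => dd.fst) (fun dd => g dd.fst)]
  refine Finset.sum_congr rfl fun v _ => ?_
  have hcard : #({dd : K.Dart | dd.fst = v} : Finset _) = K.degree v :=
    K.dart_fst_fiber_card_eq_degree v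
  calc ∑ dd ∈ ({dd : K.Dart | dd.fst = v} : Finset _), g dd.fst
      = ∑ _dd ∈ ({dd : K.Dart | dd.fst = v} : Finset _), g v := by
        refine Finset.sum_congr rfl fun dd hd => ?_
        simp only [Finset.mem_filter] at hd
        rw [hd.2]
    _ = (K.degree v : ℤ) * g v := by
        rw [Finset.sum_const, ← hcard]; simp [nsmul_eq_mul]

lemma dart_sum_eq_edge_sum (K : SimpleGraph W) (g : W → ℤ) :
    ∑ dd : K.Dart, g dd.fst =
      ∑ e ∈ K.edgeFinset, Sym2.lift ⟨fun u v => g u + g v, by intros; ring⟩ e := by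
  classical
  rw [← Finset.sum_fiberwise_of_maps_to (s := (Finset.univ : Finset K.Dart))
    (t := K.edgeFinset) (g := fun dd : K.Dart => dd.edge)
    (fun dd _ => by rw [mem_edgeFinset]; exact dd.edge_mem) (fun dd => g dd.fst)]
  refine Finset.sum_congr rfl fun e he => ?_
  rw [mem_edgeFinset] at he
  induction e with
  | _ a b =>
    let d0 : K.Dart := ⟨(a, b), he⟩
    have hfib : ({dd : K.Dart | dd.edge = d0.edge} : Finset _) = {d0, d0.symm} :=
      d0.edge_fiber
    have h2 : ({dd : K.Dart | dd.edge = s(a, b)} : Finset _) = {d0, d0.symm} := hfib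
    rw [h2, Finset.sum_insert (by simp only [Finset.mem_singleton]; exact d0.symm_ne.symm),
      Finset.sum_singleton]
    simp [d0, Dart.symm]

lemma edgeSum_add_eq (K : SimpleGraph W) (g : W → ℤ) :
    edgeSum K (fun u v => g u + g v) (by intros; ring) = ∑ v, (K.degree v : ℤ) * g v := by
  rw [edgeSum, ← dart_sum_eq_edge_sum, dart_sum_eq_degree_sum]

lemma compl_degree_int (K : SimpleGraph W) (v : W) [Fintype (Kᶜ.neighborSet v)] :
    ((Kᶜ.degree v : ℤ)) = (Fintype.card W : ℤ) - 1 - K.degree v := by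
  have h1 : K.degree v < Fintype.card W := K.degree_lt_card_verts v
  have h0 : 1 ≤ Fintype.card W := Fintype.card_pos_iff.mpr ⟨v⟩
  rw [K.degree_compl]
  have h2 : K.degree v ≤ Fintype.card W - 1 := Nat.le_sub_one_of_lt h1
  push_cast [Nat.cast_sub h2, Nat.cast_sub h0]
  ring

/-- General F-coindex formula. -/
lemma Fbar_formula (K : SimpleGraph W) :
    Fbar K = ((Fintype.card W : ℤ) - 1) * M1 K - F K := by
  have h : Fbar K = edgeSum Kᶜ (fun u v => (fun w => d K w ^ 2) u + (fun w => d K w ^ 2) v)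
      (by intros; ring) := rfl
  rw [h, edgeSum_add_eq]
  simp only [compl_degree_int]
  have h2 : ∀ v : W, ((Fintype.card W : ℤ) - 1 - K.degree v) * d K v ^ 2
      = ((Fintype.card W : ℤ) - 1) * d K v ^ 2 - d K v ^ 3 := by
    intro v; unfold d; ring
  rw [Finset.sum_congr rfl (fun v _ => h2 v), Finset.sum_sub_distrib, ← Finset.mul_sum]
  rfl

lemma degree_eq_ite_sum (K : SimpleGraph W) (x : W) :
    K.degree x = ∑ y, ite (K.Adj x y) 1 0 := by
  classical
  rw [SimpleGraph.degree, SimpleGraph.neighborFinset_eq_filter, Finset.card_filter]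

lemma vst_degree_inl (G : SimpleGraph W) (u : W) :
    (vertexSemitotal G).degree (Sum.inl u) = 2 * G.degree u := by
  classical
  rw [degree_eq_ite_sum, Fintype.sum_sum_type]
  have hA : ∑ v : W, (if (vertexSemitotal G).Adj (Sum.inl u) (Sum.inl v) then 1 else 0)
      = G.degree u := by
    rw [degree_eq_ite_sum]
    exact Finset.sum_congr rfl fun v _ => if_congr Iff.rfl rfl rfl
  have hB : ∑ e : G.edgeSet, (if (vertexSemitotal G).Adj (Sum.inl u) (Sum.inr e) then 1 else 0)
      = G.degree u := by
    have h1 : ∑ e : G.edgeSet, (if (vertexSemitotal G).Adj (Sum.inl u) (Sum.inr e) then 1 else 0)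
        = #(Finset.univ.filter (fun e : G.edgeSet => u ∈ (e : Sym2 W))) := by
      rw [Finset.card_filter]
      exact Finset.sum_congr rfl fun e _ => if_congr Iff.rfl rfl rfl
    rw [h1, ← Fintype.card_subtype]
    rw [Fintype.card_congr
      (⟨fun p => ⟨p.1.1, p.1.2, p.2⟩, fun q => ⟨⟨q.1, q.2.1⟩, q.2.2⟩,
        fun p => rfl, fun q => rfl⟩ :
        {e : G.edgeSet // u ∈ (e : Sym2 W)} ≃ G.incidenceSet u)]
    convert G.card_incidenceSet_eq_degree (v := u) using 2
  rw [hA, hB]; ring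

lemma vst_degree_inr (G : SimpleGraph W) (e : G.edgeSet) :
    (vertexSemitotal G).degree (Sum.inr e) = 2 := by
  classical
  rw [degree_eq_ite_sum, Fintype.sum_sum_type]
  have hB : ∑ f : G.edgeSet, (if (vertexSemitotal G).Adj (Sum.inr e) (Sum.inr f) then 1 else 0)
      = 0 := by
    refine Finset.sum_eq_zero fun f _ => ?_
    simp [vertexSemitotal]
  have hA : ∑ v : W, (if (vertexSemitotal G).Adj (Sum.inr e) (Sum.inl v) then 1 else 0)
      = 2 := by
    obtain ⟨e', he⟩ := e
    induction e' with
    | _ a b =>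
      have hab : a ≠ b := (G.mem_edgeSet.mp he).ne
      have h1 : ∑ v : W, (if (vertexSemitotal G).Adj (Sum.inr ⟨s(a, b), he⟩) (Sum.inl v)
          then 1 else 0) = #(Finset.univ.filter (fun v : W => v ∈ s(a, b))) := by
        rw [Finset.card_filter]
        exact Finset.sum_congr rfl fun v _ => if_congr Iff.rfl rfl rfl
      rw [h1]
      have h2 : (Finset.univ.filter (fun v : W => v ∈ s(a, b))) = {a, b} := by
        ext v; simp [Sym2.mem_iff]
      rw [h2, Finset.card_insert_of_notMem (by simpa using hab), Finset.card_singleton]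
  rw [hA, hB]

lemma card_edgeSet_eq_m (G : SimpleGraph W) : (Fintype.card G.edgeSet : ℤ) = m G := by
  rw [m, SimpleGraph.edgeFinset, Set.toFinset_card]

end Aux

theorem stmt12 {V : Type*} [Fintype V] (G : SimpleGraph V) :
    Fbar (vertexSemitotal G) =
      4 * (m G + (Fintype.card V : ℤ) - 1) * M1 G - 8 * F G +
        4 * m G * (m G + (Fintype.card V : ℤ) - 3) := by
  classical
  rw [Fbar_formula]
  have hM1 : M1 (vertexSemitotal G) = 4 * M1 G + 4 * m G := by
    rw [M1, Fintype.sum_sum_type]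
    have hA : ∑ u : V, d (vertexSemitotal G) (Sum.inl u) ^ 2 = 4 * M1 G := by
      rw [M1, Finset.mul_sum]
      refine Finset.sum_congr rfl fun u _ => ?_
      simp only [d]; rw [vst_degree_inl]; push_cast; ring
    have hB : ∑ e : G.edgeSet, d (vertexSemitotal G) (Sum.inr e) ^ 2 = 4 * m G := by
      have h : ∀ e : G.edgeSet, d (vertexSemitotal G) (Sum.inr e) ^ 2 = 4 := by
        intro e; rw [d, vst_degree_inr]; norm_num
      rw [Finset.sum_congr rfl (fun e _ => h e), Finset.sum_const, Finset.card_univ,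
        nsmul_eq_mul, card_edgeSet_eq_m]
      ring
    rw [hA, hB]
  have hF : F (vertexSemitotal G) = 8 * F G + 8 * m G := by
    rw [F, Fintype.sum_sum_type]
    have hA : ∑ u : V, d (vertexSemitotal G) (Sum.inl u) ^ 3 = 8 * F G := by
      rw [F, Finset.mul_sum]
      refine Finset.sum_congr rfl fun u _ => ?_
      simp only [d]; rw [vst_degree_inl]; push_cast; ring
    have hB : ∑ e : G.edgeSet, d (vertexSemitotal G) (Sum.inr e) ^ 3 = 8 * m G := by
      have h : ∀ e : G.edgeSet, d (vertexSemitotal G) (Sum.inr e) ^ 3 = 8 := by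
        intro e; rw [d, vst_degree_inr]; norm_num
      rw [Finset.sum_congr rfl (fun e _ => h e), Finset.sum_const, Finset.card_univ,
        nsmul_eq_mul, card_edgeSet_eq_m]
      ring
    rw [hA, hB]
  have hcard : (Fintype.card (V ⊕ G.edgeSet) : ℤ) = (Fintype.card V : ℤ) + m G := by
    rw [Fintype.card_sum]; push_cast [← card_edgeSet_eq_m]; ring
  rw [hM1, hF, hcard]
  ring

end Paper
end
end
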